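/- Under assumptions (A1) and (A2), suppose for each (x,μ) that π(·;x,μ) is an invariant probability measure of L_{x,μ} having finite moments of every order, uniformly bounded in (x,μ). Let h : ℝ^d×ℝ^d×P₂(ℝ^d) → ℝ be jointly continuous, and suppose h, f, a satisfy |g(x,y,μ) − g(x',y',μ)| ≤ K(1 ∧ |y−y'|^θ + |x−x'|)(1+|y|^m+|y'|^m) for g ∈ {h, f, a} and all x,x',y,y',μ, with h growing at most polynomially in y uniformly in (x,μ). Suppose moreover that for each (x,μ) there is v(x,·,μ) ∈ C²(ℝ^d) with v, ∇_y v, ∇²_y v bounded by K(1+|y|^q) uniformly in (x,μ) and L_{x,μ}v(x,y,μ) = h(x,y,μ) − h̄(x,μ) for all y, where h̄(x,μ) = ∫ h(x,y,μ) π(dy;x,μ). Then there is a constant C' (depending only on the constants in the above hypotheses) such that |h̄(x,μ)| ≤ C' for all (x,μ) and |h̄(x₁,μ) − h̄(x₂,μ)| ≤ C'|x₁ − x₂| for all x₁, x₂ ∈ ℝ^d and all μ ∈ P₂(ℝ^d); that is, the averaged coefficient h̄ is bounded and Lipschitz continuous in x uniformly in μ. -/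

import Mathlib

open MeasureTheory

noncomputable section

/-- First partial derivative of `φ : ℝ^d → ℝ` in the `i`-th coordinate direction. -/
def pd1 {d : ℕ} (φ : (Fin d → ℝ) → ℝ) (y : Fin d → ℝ) (i : Fin d) : ℝ :=
  fderiv ℝ φ y (Pi.single i 1)

/-- Second partial derivative of `φ : ℝ^d → ℝ` in the coordinate directions `i, j`. -/
def pd2 {d : ℕ} (φ : (Fin d → ℝ) → ℝ) (y : Fin d → ℝ) (i j : Fin d) : ℝ :=
  fderiv ℝ (fun z => fderiv ℝ φ z (Pi.single j 1)) y (Pi.single i 1)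

/-- The frozen generator `L φ (y) = f(y)·∇φ(y) + a(y):∇²φ(y)`. -/
def genL {d : ℕ} (f : (Fin d → ℝ) → Fin d → ℝ) (a : (Fin d → ℝ) → Fin d → Fin d → ℝ)
    (φ : (Fin d → ℝ) → ℝ) (y : Fin d → ℝ) : ℝ :=
  (∑ i, f y i * pd1 φ y i) + ∑ i, ∑ j, a y i j * pd2 φ y i j

/-- `C_b²` functions: twice continuously differentiable, bounded together with the
first and second derivatives. -/
def CbTwo {d : ℕ} (φ : (Fin d → ℝ) → ℝ) : Prop :=
  ContDiff ℝ 2 φ ∧ ∃ K : ℝ, ∀ y, |φ y| ≤ K ∧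
    ‖iteratedFDeriv ℝ 1 φ y‖ ≤ K ∧ ‖iteratedFDeriv ℝ 2 φ y‖ ≤ K

/-- An invariant probability measure of the frozen generator:
`∫ L φ dπ = 0` for every `φ ∈ C_b²`. -/
def IsInvariantMeasure {d : ℕ} (f : (Fin d → ℝ) → Fin d → ℝ)
    (a : (Fin d → ℝ) → Fin d → Fin d → ℝ) (π : Measure (Fin d → ℝ)) : Prop :=
  IsProbabilityMeasure π ∧
    ∀ φ : (Fin d → ℝ) → ℝ, CbTwo φ → ∫ y, genL f a φ y ∂π = 0

/-- `P₂(ℝ^d)`: Borel probability measures on `ℝ^d` with finite second moment.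
Its elements enter only as parameters. -/
def ProbMeas2 (d : ℕ) : Type :=
  {μ : Measure (Fin d → ℝ) // IsProbabilityMeasure μ ∧ Integrable (fun y => ‖y‖ ^ 2) μ}

/-- Assumption (A1): uniform ellipticity and boundedness of the symmetric diffusion
matrix `a`, two bounded `y`-derivatives, and uniform Hölder continuity in `y` of `a`
and these derivatives.  The parameter `p` ranges over the frozen data `(x, μ)`. -/
def AssumptionA1 {d : ℕ} {I : Type*} (a : I → (Fin d → ℝ) → Fin d → Fin d → ℝ) : Prop :=
  (∀ p y i j, a p y i j = a p y j i) ∧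
  (∃ lm lp : ℝ, 0 < lm ∧ lm ≤ lp ∧ ∀ p y (ξ : Fin d → ℝ),
      lm * ∑ i, ξ i ^ 2 ≤ 2 * ∑ i, ∑ j, ξ i * a p y i j * ξ j ∧
      2 * ∑ i, ∑ j, ξ i * a p y i j * ξ j ≤ lp * ∑ i, ξ i ^ 2) ∧
  (∃ K : ℝ, ∀ p y i j, |a p y i j| ≤ K) ∧
  (∀ p i j, ContDiff ℝ 2 (fun y => a p y i j)) ∧
  (∃ K : ℝ, ∀ p y i j,
      ‖iteratedFDeriv ℝ 1 (fun z => a p z i j) y‖ ≤ K ∧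
      ‖iteratedFDeriv ℝ 2 (fun z => a p z i j) y‖ ≤ K) ∧
  (∃ K θ : ℝ, 0 < θ ∧ θ ≤ 1 ∧ ∀ p y y' i j,
      |a p y i j - a p y' i j| ≤ K * ‖y - y'‖ ^ θ ∧
      ‖iteratedFDeriv ℝ 1 (fun z => a p z i j) y -
        iteratedFDeriv ℝ 1 (fun z => a p z i j) y'‖ ≤ K * ‖y - y'‖ ^ θ ∧
      ‖iteratedFDeriv ℝ 2 (fun z => a p z i j) y -
        iteratedFDeriv ℝ 2 (fun z => a p z i j) y'‖ ≤ K * ‖y - y'‖ ^ θ)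

/-- Assumption (A2): dissipativity and linear growth of the drift `f`, two bounded
`y`-derivatives, and uniform Hölder continuity in `y` of `f` and these derivatives.
The parameter `p` ranges over the frozen data `(x, μ)`. -/
def AssumptionA2 {d : ℕ} {I : Type*} (f : I → (Fin d → ℝ) → Fin d → ℝ) : Prop :=
  (∃ β C : ℝ, 0 < β ∧ 0 < C ∧ ∀ p y,
      (∑ i, f p y i * y i) ≤ -β * (∑ i, y i ^ 2) + C) ∧
  (∃ C : ℝ, ∀ p y, ‖f p y‖ ≤ C * (1 + ‖y‖)) ∧
  (∀ p i, ContDiff ℝ 2 (fun y => f p y i)) ∧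
  (∃ K : ℝ, ∀ p y i,
      ‖iteratedFDeriv ℝ 1 (fun z => f p z i) y‖ ≤ K ∧
      ‖iteratedFDeriv ℝ 2 (fun z => f p z i) y‖ ≤ K) ∧
  (∃ K θ : ℝ, 0 < θ ∧ θ ≤ 1 ∧ ∀ p y y' i,
      |f p y i - f p y' i| ≤ K * ‖y - y'‖ ^ θ ∧
      ‖iteratedFDeriv ℝ 1 (fun z => f p z i) y -
        iteratedFDeriv ℝ 1 (fun z => f p z i) y'‖ ≤ K * ‖y - y'‖ ^ θ ∧
      ‖iteratedFDeriv ℝ 2 (fun z => f p z i) y -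
        iteratedFDeriv ℝ 2 (fun z => f p z i) y'‖ ≤ K * ‖y - y'‖ ^ θ)

/-- Polynomial growth in `y`, uniformly in the parameters `(x, μ)`. -/
def PolyY {d : ℕ} {M : Type*} (g : (Fin d → ℝ) → (Fin d → ℝ) → M → ℝ) : Prop :=
  ∃ K : ℝ, ∃ m : ℕ, ∀ x y μ, |g x y μ| ≤ K * (1 + ‖y‖ ^ m)

/-- The mixed local Hölder / Lipschitz condition
`|g(x,y,μ) − g(x',y',μ)| ≤ K (1 ∧ |y−y'|^θ + |x−x'|)(1+|y|^m+|y'|^m)`. -/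
def MixedHolder {d : ℕ} {M : Type*} (g : (Fin d → ℝ) → (Fin d → ℝ) → M → ℝ) : Prop :=
  ∃ K θ : ℝ, ∃ m : ℕ, 0 < θ ∧ θ ≤ 1 ∧ ∀ x x' y y' μ,
    |g x y μ - g x' y' μ| ≤
      K * (min 1 (‖y - y'‖ ^ θ) + ‖x - x'‖) * (1 + ‖y‖ ^ m + ‖y'‖ ^ m)

section Helpers
variable {d : ℕ} {u w φ ψ : (Fin d → ℝ) → ℝ} {y : Fin d → ℝ} {i j : Fin d}

lemma norm_single_one (i : Fin d) : ‖(Pi.single i (1:ℝ) : Fin d → ℝ)‖ = 1 := by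
  rw [Pi.norm_single]; simp

lemma abs_pd1_le (φ : (Fin d → ℝ) → ℝ) (y : Fin d → ℝ) (i : Fin d) :
    |pd1 φ y i| ≤ ‖iteratedFDeriv ℝ 1 φ y‖ := by
  have h : pd1 φ y i = iteratedFDeriv ℝ 1 φ y ![Pi.single i 1] := by
    rw [iteratedFDeriv_one_apply]; rfl
  rw [h, ← Real.norm_eq_abs]
  calc ‖iteratedFDeriv ℝ 1 φ y ![Pi.single i 1]‖
      ≤ ‖iteratedFDeriv ℝ 1 φ y‖ * ∏ k : Fin 1, ‖(![Pi.single i 1] : Fin 1 → Fin d → ℝ) k‖ :=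
        (iteratedFDeriv ℝ 1 φ y).le_opNorm _
    _ ≤ ‖iteratedFDeriv ℝ 1 φ y‖ := by
        simp [norm_single_one]

lemma contDiff_fderiv_apply {w : (Fin d → ℝ) → ℝ} (hw : ContDiff ℝ 2 w) (j : Fin d) :
    ContDiff ℝ 1 fun z => pd1 w z j := by
  have h1 : ContDiff ℝ 1 (fderiv ℝ w) := hw.fderiv_right (by norm_num)
  exact h1.clm_apply contDiff_const

lemma pd2_eq {φ : (Fin d → ℝ) → ℝ} (hφ : ContDiff ℝ 2 φ) (y : Fin d → ℝ) (i j : Fin d) :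
    pd2 φ y i j = fderiv ℝ (fderiv ℝ φ) y (Pi.single i 1) (Pi.single j 1) := by
  have hdf : DifferentiableAt ℝ (fderiv ℝ φ) y :=
    ((hφ.fderiv_right (m := 1) (by norm_num)).differentiable (by norm_num)) y
  unfold pd2
  rw [fderiv_clm_apply (c := fderiv ℝ φ) (u := fun _ => Pi.single j (1:ℝ)) hdf
    (differentiableAt_const _)]
  simp

lemma abs_pd2_le {φ : (Fin d → ℝ) → ℝ} (hφ : ContDiff ℝ 2 φ) (y : Fin d → ℝ) (i j : Fin d) :
    |pd2 φ y i j| ≤ ‖iteratedFDeriv ℝ 2 φ y‖ := by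
  rw [pd2_eq hφ]
  have h : fderiv ℝ (fderiv ℝ φ) y (Pi.single i 1) (Pi.single j 1)
      = iteratedFDeriv ℝ 2 φ y ![Pi.single i 1, Pi.single j 1] := by
    rw [iteratedFDeriv_two_apply]; rfl
  rw [h, ← Real.norm_eq_abs]
  calc ‖iteratedFDeriv ℝ 2 φ y ![Pi.single i 1, Pi.single j 1]‖
      ≤ ‖iteratedFDeriv ℝ 2 φ y‖ * ∏ k : Fin 2, ‖(![Pi.single i (1:ℝ), Pi.single j 1] : Fin 2 → Fin d → ℝ) k‖ :=
        (iteratedFDeriv ℝ 2 φ y).le_opNorm _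
    _ ≤ ‖iteratedFDeriv ℝ 2 φ y‖ := by
        simp [Fin.prod_univ_two, norm_single_one]


lemma contDiff_pd1 (hw : ContDiff ℝ 2 w) (j : Fin d) : ContDiff ℝ 1 fun z => pd1 w z j :=
  (hw.fderiv_right (by norm_num)).clm_apply contDiff_const

lemma continuous_pd1 (hw : ContDiff ℝ 2 w) (j : Fin d) : Continuous fun z => pd1 w z j :=
  (contDiff_pd1 hw j).continuous

lemma continuous_pd2 (hw : ContDiff ℝ 2 w) (i j : Fin d) : Continuous fun z => pd2 w z i j := by
  have h1 : ContDiff ℝ 1 fun z => fderiv ℝ w z (Pi.single j 1) := contDiff_pd1 hw j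
  have h2 : Continuous fun z => fderiv ℝ (fun z' => fderiv ℝ w z' (Pi.single j 1)) z :=
    h1.continuous_fderiv (by norm_num)
  exact h2.clm_apply continuous_const

lemma pd1_mul (hu : DifferentiableAt ℝ u y) (hw : DifferentiableAt ℝ w y) :
    pd1 (fun z => u z * w z) y i = u y * pd1 w y i + w y * pd1 u y i := by
  unfold pd1; rw [fderiv_fun_mul hu hw]; simp

lemma pd2_mul (hu : ContDiff ℝ 2 u) (hw : ContDiff ℝ 2 w) :
    pd2 (fun z => u z * w z) y i j =
      u y * pd2 w y i j + pd1 w y j * pd1 u y i +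
        (w y * pd2 u y i j + pd1 u y j * pd1 w y i) := by
  have hud : Differentiable ℝ u := hu.differentiable (by norm_num)
  have hwd : Differentiable ℝ w := hw.differentiable (by norm_num)
  have hupd : DifferentiableAt ℝ (fun z => pd1 u z j) y :=
    ((contDiff_pd1 hu j).differentiable (by norm_num)) y
  have hwpd : DifferentiableAt ℝ (fun z => pd1 w z j) y :=
    ((contDiff_pd1 hw j).differentiable (by norm_num)) y
  have e : (fun z => fderiv ℝ (fun z' => u z' * w z') z (Pi.single j 1)) =
      fun z => u z * pd1 w z j + w z * pd1 u z j := by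
    funext z
    exact pd1_mul (hud z) (hwd z)
  unfold pd2
  rw [e, fderiv_fun_add (f := fun z => u z * pd1 w z j) (g := fun z => w z * pd1 u z j) ((hud y).mul hwpd) ((hwd y).mul hupd)]
  have e1 : fderiv ℝ (fun z => u z * pd1 w z j) y (Pi.single i 1) =
      u y * pd2 w y i j + pd1 w y j * pd1 u y i := pd1_mul (hud y) hwpd
  have e2 : fderiv ℝ (fun z => w z * pd1 u z j) y (Pi.single i 1) =
      w y * pd2 u y i j + pd1 u y j * pd1 w y i := pd1_mul (hwd y) hupd
  simp only [ContinuousLinearMap.add_apply]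
  rw [e1, e2]
  rfl

lemma pd1_congr (h : φ =ᶠ[nhds y] ψ) : pd1 φ y i = pd1 ψ y i := by
  unfold pd1; rw [h.fderiv_eq]

lemma pd2_congr (h : φ =ᶠ[nhds y] ψ) : pd2 φ y i j = pd2 ψ y i j := by
  unfold pd2
  have h1 : (fun z => fderiv ℝ φ z (Pi.single j 1)) =ᶠ[nhds y]
      (fun z => fderiv ℝ ψ z (Pi.single j 1)) := by
    filter_upwards [h.fderiv (𝕜 := ℝ)] with z hz
    rw [hz]
  rw [h1.fderiv_eq]

lemma genL_congr {f : (Fin d → ℝ) → Fin d → ℝ} {a : (Fin d → ℝ) → Fin d → Fin d → ℝ}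
    (h : φ =ᶠ[nhds y] ψ) : genL f a φ y = genL f a ψ y := by
  unfold genL
  congr 1
  · exact Finset.sum_congr rfl fun i _ => by rw [pd1_congr h]
  · exact Finset.sum_congr rfl fun i _ => Finset.sum_congr rfl fun j _ => by rw [pd2_congr h]

lemma pd1_comp_smul (c : ℝ) (hφ : Differentiable ℝ φ) :
    pd1 (fun z => φ (c • z)) y i = c * pd1 φ (c • y) i := by
  unfold pd1
  have hL : (fun z : Fin d → ℝ => φ (c • z)) = φ ∘ (c • ContinuousLinearMap.id ℝ (Fin d → ℝ)) := rfl
  rw [hL, fderiv_comp y (hφ _) (ContinuousLinearMap.differentiableAt _),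
    ContinuousLinearMap.fderiv]
  simp [smul_eq_mul]

lemma pd2_comp_smul (c : ℝ) (hφ : ContDiff ℝ 2 φ) :
    pd2 (fun z => φ (c • z)) y i j = c * (c * pd2 φ (c • y) i j) := by
  have hφd : Differentiable ℝ φ := hφ.differentiable (by norm_num)
  have e : (fun z => fderiv ℝ (fun z' => φ (c • z')) z (Pi.single j 1)) =
      fun z => c * pd1 φ (c • z) j := by
    funext z; exact pd1_comp_smul c hφd
  unfold pd2
  rw [e]
  have hg : Differentiable ℝ fun w => pd1 φ w j := (contDiff_pd1 hφ j).differentiable (by norm_num)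
  have e2 : fderiv ℝ (fun z => c * pd1 φ (c • z) j) y (Pi.single i 1) =
      c * fderiv ℝ (fun z => pd1 φ (c • z) j) y (Pi.single i 1) := by
    rw [fderiv_const_mul]
    · simp
    · exact (hg.comp ((c • ContinuousLinearMap.id ℝ (Fin d → ℝ)).differentiable)) y
  rw [e2]
  exact congrArg (fun t => c * t) (pd1_comp_smul (φ := fun w => pd1 φ w j) (y := y) (i := i) c hg)

lemma abs_genL_le {f : (Fin d → ℝ) → Fin d → ℝ} {a : (Fin d → ℝ) → Fin d → Fin d → ℝ}
    {F A P : ℝ}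
    (hf1 : ∀ i, |f y i| ≤ F) (ha1 : ∀ i j, |a y i j| ≤ A)
    (h1 : ∀ i, |pd1 φ y i| ≤ P) (h2 : ∀ i j, |pd2 φ y i j| ≤ P) (hP : 0 ≤ P) :
    |genL f a φ y| ≤ (d * F + d ^ 2 * A) * P := by
  have key1 : |∑ i, f y i * pd1 φ y i| ≤ d * F * P := by
    calc |∑ i, f y i * pd1 φ y i| ≤ ∑ i, |f y i * pd1 φ y i| := Finset.abs_sum_le_sum_abs _ _
      _ ≤ ∑ _i : Fin d, F * P := Finset.sum_le_sum fun i _ => by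
          rw [abs_mul]
          exact mul_le_mul (hf1 i) (h1 i) (abs_nonneg _) (le_trans (abs_nonneg _) (hf1 i))
      _ = d * F * P := by simp [Finset.sum_const, mul_assoc]
  have key2 : |∑ i, ∑ j, a y i j * pd2 φ y i j| ≤ d ^ 2 * A * P := by
    calc |∑ i, ∑ j, a y i j * pd2 φ y i j| ≤ ∑ i, |∑ j, a y i j * pd2 φ y i j| :=
        Finset.abs_sum_le_sum_abs _ _
      _ ≤ ∑ _i : Fin d, (d : ℝ) * (A * P) := Finset.sum_le_sum fun i _ => by
          calc |∑ j, a y i j * pd2 φ y i j| ≤ ∑ j, |a y i j * pd2 φ y i j| :=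
              Finset.abs_sum_le_sum_abs _ _
            _ ≤ ∑ _j : Fin d, A * P := Finset.sum_le_sum fun jj _ => by
                rw [abs_mul]
                exact mul_le_mul (ha1 i jj) (h2 i jj) (abs_nonneg _)
                  (le_trans (abs_nonneg _) (ha1 i jj))
            _ = (d : ℝ) * (A * P) := by simp [Finset.sum_const]
      _ = d ^ 2 * A * P := by simp [Finset.sum_const]; ring
  calc |genL f a φ y| ≤ |∑ i, f y i * pd1 φ y i| + |∑ i, ∑ j, a y i j * pd2 φ y i j| :=
      abs_add_le _ _
    _ ≤ d * F * P + d ^ 2 * A * P := add_le_add key1 key2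
    _ = (d * F + d ^ 2 * A) * P := by ring

lemma pow_le_one_add_pow {t : ℝ} (ht : 0 ≤ t) {p r : ℕ} (hpr : p ≤ r) : t ^ p ≤ 1 + t ^ r := by
  rcases le_or_gt t 1 with h | h
  · exact le_trans (pow_le_one₀ ht h) (le_add_of_nonneg_right (pow_nonneg ht _))
  · exact le_trans (pow_le_pow_right₀ h.le hpr) (le_add_of_nonneg_left zero_le_one)

lemma one_add_pow_mul {t : ℝ} (ht : 0 ≤ t) (p q : ℕ) :
    (1 + t ^ p) * (1 + t ^ q) ≤ 4 * (1 + t ^ (p + q)) := by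
  have h1 : t ^ p ≤ 1 + t ^ (p + q) := pow_le_one_add_pow ht (Nat.le_add_right _ _)
  have h2 : t ^ q ≤ 1 + t ^ (p + q) := pow_le_one_add_pow ht (Nat.le_add_left _ _)
  have h3 : t ^ p * t ^ q = t ^ (p + q) := (pow_add t p q).symm
  nlinarith [pow_nonneg ht (p + q), pow_nonneg ht p, pow_nonneg ht q]



open Filter Topology in
lemma integral_genL_eq_zero {d : ℕ}
    (f : (Fin d → ℝ) → Fin d → ℝ) (a : (Fin d → ℝ) → Fin d → Fin d → ℝ)
    (π : Measure (Fin d → ℝ))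
    (hinv : IsInvariantMeasure f a π)
    (hfc : ∀ i, Continuous fun y => f y i) (hac : ∀ i j, Continuous fun y => a y i j)
    {Cf Ka : ℝ} (hfb : ∀ y i, |f y i| ≤ Cf * (1 + ‖y‖)) (hab : ∀ y i j, |a y i j| ≤ Ka)
    (mom : ∀ q : ℕ, Integrable (fun y => ‖y‖ ^ q) π)
    (φ : (Fin d → ℝ) → ℝ) (hφ : ContDiff ℝ 2 φ) {Kv : ℝ} (hKv : 0 ≤ Kv) {q : ℕ}
    (hb : ∀ y, |φ y| ≤ Kv * (1 + ‖y‖ ^ q) ∧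
      ‖iteratedFDeriv ℝ 1 φ y‖ ≤ Kv * (1 + ‖y‖ ^ q) ∧
      ‖iteratedFDeriv ℝ 2 φ y‖ ≤ Kv * (1 + ‖y‖ ^ q)) :
    ∫ y, genL f a φ y ∂π = 0 := by
  haveI : IsProbabilityMeasure π := hinv.1
  rcases Nat.eq_zero_or_pos d with hd0 | hd0
  · subst hd0
    have : genL f a φ = fun _ => 0 := by
      funext y; unfold genL; simp
    rw [this]; simp
  -- nonnegativity of the constants
  have hy0 : ∃ y0 : Fin d → ℝ, True := ⟨0, trivial⟩
  have hCf : 0 ≤ Cf := by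
    have := hfb 0 ⟨0, hd0⟩
    have h1 : (0:ℝ) ≤ Cf * (1 + ‖(0 : Fin d → ℝ)‖) := le_trans (abs_nonneg _) this
    simpa using h1
  have hKa : 0 ≤ Ka := le_trans (abs_nonneg _) (hab 0 ⟨0, hd0⟩ ⟨0, hd0⟩)
  -- the bump function
  let χ : ContDiffBump (0 : Fin d → ℝ) := ⟨1, 2, one_pos, one_lt_two⟩
  have hχC : ∀ n : ℕ∞, ContDiff ℝ n ⇑χ := fun _ => χ.contDiff
  obtain ⟨B1, hB1⟩ := (χ.hasCompactSupport.iteratedFDeriv (𝕜 := ℝ) 1).exists_bound_of_continuous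
    ((hχC 2).continuous_iteratedFDeriv (by norm_num))
  obtain ⟨B2, hB2⟩ := (χ.hasCompactSupport.iteratedFDeriv (𝕜 := ℝ) 2).exists_bound_of_continuous
    ((hχC 2).continuous_iteratedFDeriv (by norm_num))
  set B : ℝ := max (max B1 B2) 0 with hBdef
  have hB0 : 0 ≤ B := le_max_right _ _
  have hB1' : ∀ y, ‖iteratedFDeriv ℝ 1 (⇑χ) y‖ ≤ B :=
    fun y => le_trans (hB1 y) (le_trans (le_max_left _ _) (le_max_left _ _))
  have hB2' : ∀ y, ‖iteratedFDeriv ℝ 2 (⇑χ) y‖ ≤ B :=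
    fun y => le_trans (hB2 y) (le_trans (le_max_right _ _) (le_max_left _ _))
  -- the truncations
  set c : ℕ → ℝ := fun n => ((n : ℝ) + 1)⁻¹ with hcdef
  have hc_pos : ∀ n, 0 < c n := fun n => by positivity
  have hc_le : ∀ n, c n ≤ 1 := fun n => by
    rw [hcdef]
    rw [inv_le_one_iff₀]; right; linarith [Nat.cast_nonneg (α := ℝ) n]
  set χn : ℕ → (Fin d → ℝ) → ℝ := fun n z => χ (c n • z) with hχndef
  set φn : ℕ → (Fin d → ℝ) → ℝ := fun n z => φ z * χn n z with hφndef
  have hχnC : ∀ n, ContDiff ℝ 2 (χn n) := fun n =>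
    (hχC 2).comp (contDiff_id.const_smul (c n))
  have hφnC : ∀ n, ContDiff ℝ 2 (φn n) := fun n => hφ.mul (hχnC n)
  have hχn_le : ∀ n z, |χn n z| ≤ 1 := fun n z => by
    rw [abs_of_nonneg χ.nonneg]; exact χ.le_one
  -- derivative bounds for the truncations
  have hpd1χ : ∀ n y i, |pd1 (χn n) y i| ≤ B := by
    intro n y i
    have e : pd1 (χn n) y i = c n * pd1 (⇑χ) (c n • y) i :=
      pd1_comp_smul (c n) ((hχC 1).differentiable (by norm_num))
    rw [e, abs_mul, abs_of_pos (hc_pos n)]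
    calc c n * |pd1 (⇑χ) (c n • y) i| ≤ 1 * B := by
          apply mul_le_mul (hc_le n) (le_trans (abs_pd1_le _ _ _) (hB1' _)) (abs_nonneg _)
            zero_le_one
      _ = B := one_mul B
  have hpd2χ : ∀ n y i j, |pd2 (χn n) y i j| ≤ B := by
    intro n y i j
    have e : pd2 (χn n) y i j = c n * (c n * pd2 (⇑χ) (c n • y) i j) :=
      pd2_comp_smul (c n) (hχC 2)
    rw [e, abs_mul, abs_mul, abs_of_pos (hc_pos n)]
    calc c n * (c n * |pd2 (⇑χ) (c n • y) i j|) ≤ 1 * (1 * B) := by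
          apply mul_le_mul (hc_le n) _ (by positivity) zero_le_one
          apply mul_le_mul (hc_le n) (le_trans (abs_pd2_le (hχC 2) _ _ _) (hB2' _))
            (abs_nonneg _) zero_le_one
      _ = B := by ring
  set D : ℝ := Kv * (3 * B + 1) with hDdef
  have hD0 : 0 ≤ D := by positivity
  have hpd1φn : ∀ n y i, |pd1 (φn n) y i| ≤ D * (1 + ‖y‖ ^ q) := by
    intro n y i
    have e : pd1 (φn n) y i = φ y * pd1 (χn n) y i + χn n y * pd1 φ y i :=
      pd1_mul ((hφ.differentiable (by norm_num)) y) (((hχnC n).differentiable (by norm_num)) y)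
    have hφb := (hb y).1
    have hpd1φ : |pd1 φ y i| ≤ Kv * (1 + ‖y‖ ^ q) := le_trans (abs_pd1_le _ _ _) (hb y).2.1
    have hyq : (0:ℝ) ≤ 1 + ‖y‖ ^ q := by positivity
    rw [e]
    calc |φ y * pd1 (χn n) y i + χn n y * pd1 φ y i|
        ≤ |φ y| * |pd1 (χn n) y i| + |χn n y| * |pd1 φ y i| := by
          refine le_trans (abs_add_le _ _) ?_
          rw [abs_mul, abs_mul]
      _ ≤ (Kv * (1 + ‖y‖ ^ q)) * B + 1 * (Kv * (1 + ‖y‖ ^ q)) := by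
          apply add_le_add
          · exact mul_le_mul hφb (hpd1χ n y i) (abs_nonneg _) (by positivity)
          · exact mul_le_mul (hχn_le n y) hpd1φ (abs_nonneg _) zero_le_one
      _ ≤ D * (1 + ‖y‖ ^ q) := by rw [hDdef]; nlinarith [mul_nonneg hKv hyq, mul_nonneg (mul_nonneg hKv hyq) hB0]
  have hpd2φn : ∀ n y i j, |pd2 (φn n) y i j| ≤ D * (1 + ‖y‖ ^ q) := by
    intro n y i j
    have e : pd2 (φn n) y i j =
        φ y * pd2 (χn n) y i j + pd1 (χn n) y j * pd1 φ y i +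
          (χn n y * pd2 φ y i j + pd1 φ y j * pd1 (χn n) y i) := pd2_mul hφ (hχnC n)
    have hφb := (hb y).1
    have hpd1φ : ∀ k, |pd1 φ y k| ≤ Kv * (1 + ‖y‖ ^ q) :=
      fun k => le_trans (abs_pd1_le _ _ _) (hb y).2.1
    have hpd2φ : |pd2 φ y i j| ≤ Kv * (1 + ‖y‖ ^ q) := le_trans (abs_pd2_le hφ _ _ _) (hb y).2.2
    have hyq : (0:ℝ) ≤ 1 + ‖y‖ ^ q := by positivity
    have hKP : (0:ℝ) ≤ Kv * (1 + ‖y‖ ^ q) := mul_nonneg hKv hyq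
    rw [e]
    have t1 : |φ y * pd2 (χn n) y i j| ≤ Kv * (1 + ‖y‖ ^ q) * B := by
      rw [abs_mul]; exact mul_le_mul hφb (hpd2χ n y i j) (abs_nonneg _) hKP
    have t2 : |pd1 (χn n) y j * pd1 φ y i| ≤ B * (Kv * (1 + ‖y‖ ^ q)) := by
      rw [abs_mul]; exact mul_le_mul (hpd1χ n y j) (hpd1φ i) (abs_nonneg _) hB0
    have t3 : |χn n y * pd2 φ y i j| ≤ 1 * (Kv * (1 + ‖y‖ ^ q)) := by
      rw [abs_mul]; exact mul_le_mul (hχn_le n y) hpd2φ (abs_nonneg _) zero_le_one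
    have t4 : |pd1 φ y j * pd1 (χn n) y i| ≤ Kv * (1 + ‖y‖ ^ q) * B := by
      rw [abs_mul]; exact mul_le_mul (hpd1φ j) (hpd1χ n y i) (abs_nonneg _) hKP
    calc |φ y * pd2 (χn n) y i j + pd1 (χn n) y j * pd1 φ y i +
          (χn n y * pd2 φ y i j + pd1 φ y j * pd1 (χn n) y i)|
        ≤ |φ y * pd2 (χn n) y i j + pd1 (χn n) y j * pd1 φ y i| +
          |χn n y * pd2 φ y i j + pd1 φ y j * pd1 (χn n) y i| := abs_add_le _ _
      _ ≤ (|φ y * pd2 (χn n) y i j| + |pd1 (χn n) y j * pd1 φ y i|) +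
          (|χn n y * pd2 φ y i j| + |pd1 φ y j * pd1 (χn n) y i|) :=
            add_le_add (abs_add_le _ _) (abs_add_le _ _)
      _ ≤ (Kv * (1 + ‖y‖ ^ q) * B + B * (Kv * (1 + ‖y‖ ^ q))) +
          (1 * (Kv * (1 + ‖y‖ ^ q)) + Kv * (1 + ‖y‖ ^ q) * B) :=
            add_le_add (add_le_add t1 t2) (add_le_add t3 t4)
      _ = D * (1 + ‖y‖ ^ q) := by rw [hDdef]; ring
  -- uniform dominating bound
  set M : ℝ := D * (4 * d * Cf + 2 * d ^ 2 * Ka) with hMdef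
  have hGbound : ∀ n y, |genL f a (φn n) y| ≤ M * (1 + ‖y‖ ^ (q + 1)) := by
    intro n y
    have key := abs_genL_le (f := f) (a := a) (φ := φn n) (y := y)
      (F := Cf * (1 + ‖y‖)) (A := Ka) (P := D * (1 + ‖y‖ ^ q))
      (fun i => hfb y i) (fun i j => hab y i j) (fun i => hpd1φn n y i)
      (fun i j => hpd2φn n y i j) (by positivity)
    refine le_trans key ?_
    have ht : (0:ℝ) ≤ ‖y‖ := norm_nonneg y
    have h4 : (1 + ‖y‖ ^ 1) * (1 + ‖y‖ ^ q) ≤ 4 * (1 + ‖y‖ ^ (1 + q)) := one_add_pow_mul ht 1 q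
    rw [pow_one] at h4
    rw [Nat.add_comm 1 q] at h4
    have h5 : ‖y‖ ^ q ≤ 1 + ‖y‖ ^ (q + 1) := pow_le_one_add_pow ht (Nat.le_succ q)
    have hq1 : (0:ℝ) ≤ ‖y‖ ^ (q + 1) := by positivity
    have hqq : (0:ℝ) ≤ ‖y‖ ^ q := by positivity
    have hdd : (0:ℝ) ≤ (d:ℝ) := Nat.cast_nonneg d
    rw [hMdef]
    nlinarith [mul_nonneg hdd hCf, mul_nonneg (mul_nonneg hdd hdd) hKa,
      mul_nonneg hD0 (mul_nonneg hdd hCf), mul_nonneg hD0 (mul_nonneg (mul_nonneg hdd hdd) hKa),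
      mul_le_mul_of_nonneg_left h4 (mul_nonneg hD0 (mul_nonneg hdd hCf)),
      mul_le_mul_of_nonneg_left h5 (mul_nonneg hD0 (mul_nonneg (mul_nonneg hdd hdd) hKa)),
      sq_nonneg ((d:ℝ))]
  -- CbTwo of the truncations, hence vanishing integrals
  have hsupp : ∀ n, HasCompactSupport (φn n) := by
    intro n
    have h1 : HasCompactSupport (χn n) := by
      have : χn n = (⇑χ) ∘ (Homeomorph.smulOfNeZero (c n) (hc_pos n).ne') := rfl
      rw [this]
      exact χ.hasCompactSupport.comp_homeomorph _
    exact h1.mul_left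
  have h0 : ∀ n, ∫ y, genL f a (φn n) y ∂π = 0 := by
    intro n
    apply hinv.2
    constructor
    · exact hφnC n
    · obtain ⟨M0, hM0⟩ := (hsupp n).exists_bound_of_continuous (hφnC n).continuous
      obtain ⟨M1, hM1⟩ := ((hsupp n).iteratedFDeriv (𝕜 := ℝ) 1).exists_bound_of_continuous
        ((hφnC n).continuous_iteratedFDeriv (by norm_num))
      obtain ⟨M2, hM2⟩ := ((hsupp n).iteratedFDeriv (𝕜 := ℝ) 2).exists_bound_of_continuous
        ((hφnC n).continuous_iteratedFDeriv (by norm_num))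
      refine ⟨max (max M0 M1) M2, fun y => ⟨?_, ?_, ?_⟩⟩
      · exact le_trans (le_of_eq (Real.norm_eq_abs _).symm)
          (le_trans (hM0 y) (le_trans (le_max_left _ _) (le_max_left _ _)))
      · exact le_trans (hM1 y) (le_trans (le_max_right _ _) (le_max_left _ _))
      · exact le_trans (hM2 y) (le_max_right _ _)
  -- continuity / measurability
  have hcontFn : ∀ ψ : (Fin d → ℝ) → ℝ, ContDiff ℝ 2 ψ → Continuous (genL f a ψ) := by
    intro ψ hψ
    unfold genL
    apply Continuous.add
    · exact continuous_finset_sum _ fun i _ => (hfc i).mul (continuous_pd1 hψ i)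
    · exact continuous_finset_sum _ fun i _ =>
        continuous_finset_sum _ fun j _ => (hac i j).mul (continuous_pd2 hψ i j)
  -- pointwise convergence
  have hlim : ∀ y, Tendsto (fun n => genL f a (φn n) y) atTop (𝓝 (genL f a φ y)) := by
    intro y
    apply tendsto_const_nhds.congr'
    filter_upwards [eventually_ge_atTop ⌈‖y‖⌉₊] with n hn
    have hev : φn n =ᶠ[nhds y] φ := by
      filter_upwards [Metric.ball_mem_nhds y one_pos] with z hz
      have hz1 : ‖z‖ ≤ ‖y‖ + 1 := by
        have := norm_sub_norm_le z y
        have h2 : dist z y < 1 := hz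
        rw [dist_eq_norm] at h2
        linarith [le_trans (norm_sub_norm_le z y) h2.le]
      have hz2 : ‖z‖ ≤ (n : ℝ) + 1 := by
        have h3 : ‖y‖ ≤ (⌈‖y‖⌉₊ : ℝ) := Nat.le_ceil _
        have hnc : ((⌈‖y‖⌉₊ : ℕ) : ℝ) ≤ (n : ℝ) := Nat.cast_le.mpr hn
        linarith
      have hc1 : ‖c n • z‖ ≤ 1 := by
        have e1 : ‖c n • z‖ = c n * ‖z‖ := by
          rw [norm_smul, Real.norm_eq_abs, abs_of_pos (hc_pos n)]
        have e2 : c n * ‖z‖ ≤ c n * ((n : ℝ) + 1) :=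
          mul_le_mul_of_nonneg_left hz2 (hc_pos n).le
        have e3 : c n * ((n : ℝ) + 1) = 1 := by
          rw [hcdef]
          exact inv_mul_cancel₀ (by positivity)
        rw [e1]
        rw [e3] at e2
        exact e2
      have hone : χ (c n • z) = 1 := χ.one_of_mem_closedBall (by
        simpa [Metric.mem_closedBall, dist_eq_norm] using hc1)
      show φ z * χn n z = φ z
      rw [hχndef]
      simp only []
      rw [hone, mul_one]
    exact (genL_congr hev).symm
  -- dominated convergence
  have hGint : Integrable (fun y => M * (1 + ‖y‖ ^ (q + 1))) π :=
    (((integrable_const (1:ℝ)).add (mom (q + 1))).const_mul M)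
  have hDCT : Tendsto (fun n => ∫ y, genL f a (φn n) y ∂π) atTop
      (𝓝 (∫ y, genL f a φ y ∂π)) := by
    apply tendsto_integral_of_dominated_convergence (fun y => M * (1 + ‖y‖ ^ (q + 1)))
    · exact fun n => (hcontFn (φn n) (hφnC n)).aestronglyMeasurable
    · exact hGint
    · intro n
      filter_upwards with y
      rw [Real.norm_eq_abs]
      exact hGbound n y
    · filter_upwards with y
      exact hlim y
  have h2 : (fun n => ∫ y, genL f a (φn n) y ∂π) = fun _ => (0:ℝ) := funext h0
  rw [h2] at hDCT
  exact tendsto_nhds_unique hDCT tendsto_const_nhds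

end Helpers
section Helpers2
open Filter Topology
variable {d : ℕ}

lemma abs_genL_le_poly {f : (Fin d → ℝ) → Fin d → ℝ} {a : (Fin d → ℝ) → Fin d → Fin d → ℝ}
    {φ : (Fin d → ℝ) → ℝ} {y : Fin d → ℝ} {Cf Ka Kp : ℝ} {q : ℕ}
    (hCf : 0 ≤ Cf) (hKa : 0 ≤ Ka) (hKp : 0 ≤ Kp)
    (hfb : ∀ i, |f y i| ≤ Cf * (1 + ‖y‖)) (hab : ∀ i j, |a y i j| ≤ Ka)
    (h1 : ∀ i, |pd1 φ y i| ≤ Kp * (1 + ‖y‖ ^ q)) (h2 : ∀ i j, |pd2 φ y i j| ≤ Kp * (1 + ‖y‖ ^ q)) :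
    |genL f a φ y| ≤ Kp * (4 * d * Cf + 2 * d ^ 2 * Ka) * (1 + ‖y‖ ^ (q + 1)) := by
  have key := abs_genL_le (f := f) (a := a) (φ := φ) (y := y)
    (F := Cf * (1 + ‖y‖)) (A := Ka) (P := Kp * (1 + ‖y‖ ^ q)) hfb hab h1 h2 (by positivity)
  refine le_trans key ?_
  have ht : (0:ℝ) ≤ ‖y‖ := norm_nonneg y
  have h4 : (1 + ‖y‖ ^ 1) * (1 + ‖y‖ ^ q) ≤ 4 * (1 + ‖y‖ ^ (1 + q)) := one_add_pow_mul ht 1 q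
  rw [pow_one, Nat.add_comm 1 q] at h4
  have h5 : ‖y‖ ^ q ≤ 1 + ‖y‖ ^ (q + 1) := pow_le_one_add_pow ht (Nat.le_succ q)
  have hq1 : (0:ℝ) ≤ ‖y‖ ^ (q + 1) := by positivity
  have hqq : (0:ℝ) ≤ ‖y‖ ^ q := by positivity
  have hdd : (0:ℝ) ≤ (d:ℝ) := Nat.cast_nonneg d
  nlinarith [mul_nonneg hdd hCf, mul_nonneg (mul_nonneg hdd hdd) hKa,
    mul_nonneg hKp (mul_nonneg hdd hCf), mul_nonneg hKp (mul_nonneg (mul_nonneg hdd hdd) hKa),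
    mul_le_mul_of_nonneg_left h4 (mul_nonneg hKp (mul_nonneg hdd hCf)),
    mul_le_mul_of_nonneg_left h5 (mul_nonneg hKp (mul_nonneg (mul_nonneg hdd hdd) hKa)),
    sq_nonneg ((d:ℝ))]

lemma integrable_of_poly {π : Measure (Fin d → ℝ)} [IsProbabilityMeasure π]
    (mom : ∀ q : ℕ, Integrable (fun y => ‖y‖ ^ q) π)
    {g : (Fin d → ℝ) → ℝ} (hg : AEStronglyMeasurable g π) {K : ℝ} {m : ℕ}
    (hb : ∀ y, |g y| ≤ K * (1 + ‖y‖ ^ m)) : Integrable g π := by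
  refine Integrable.mono' (((integrable_const (1:ℝ)).add (mom m)).const_mul K) hg ?_
  filter_upwards with y
  rw [Real.norm_eq_abs]
  exact hb y

lemma abs_integral_le_poly {π : Measure (Fin d → ℝ)} [IsProbabilityMeasure π]
    (mom : ∀ q : ℕ, Integrable (fun y => ‖y‖ ^ q) π)
    {g : (Fin d → ℝ) → ℝ} (hg : AEStronglyMeasurable g π) {K : ℝ} (hK : 0 ≤ K) {m : ℕ}
    (hb : ∀ y, |g y| ≤ K * (1 + ‖y‖ ^ m)) {Mq : ℝ} (hMq : (∫ y, ‖y‖ ^ m ∂π) ≤ Mq) :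
    |∫ y, g y ∂π| ≤ K * (1 + Mq) := by
  have hInt : Integrable g π := integrable_of_poly mom hg hb
  have step1 : |∫ y, g y ∂π| ≤ ∫ y, |g y| ∂π := by
    rw [← Real.norm_eq_abs (∫ y, g y ∂π)]
    exact (norm_integral_le_integral_norm g).trans (le_of_eq (by simp [Real.norm_eq_abs]))
  have step2 : ∫ y, |g y| ∂π ≤ ∫ y, K * (1 + ‖y‖ ^ m) ∂π :=
    integral_mono hInt.abs (((integrable_const (1:ℝ)).add (mom m)).const_mul K) fun y => hb y
  have step3 : ∫ y, K * (1 + ‖y‖ ^ m) ∂π = K * (1 + ∫ y, ‖y‖ ^ m ∂π) := by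
    rw [MeasureTheory.integral_const_mul, integral_add (integrable_const (1:ℝ)) (mom m), integral_const]
    simp
  have h0 : (0:ℝ) ≤ ∫ y, ‖y‖ ^ m ∂π := integral_nonneg fun y => by positivity
  calc |∫ y, g y ∂π| ≤ ∫ y, K * (1 + ‖y‖ ^ m) ∂π := le_trans step1 step2
    _ = K * (1 + ∫ y, ‖y‖ ^ m ∂π) := step3
    _ ≤ K * (1 + Mq) := mul_le_mul_of_nonneg_left (by linarith) hK

lemma continuous_genL {f : (Fin d → ℝ) → Fin d → ℝ} {a : (Fin d → ℝ) → Fin d → Fin d → ℝ}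
    {φ : (Fin d → ℝ) → ℝ} (hφ : ContDiff ℝ 2 φ)
    (hfc : ∀ i, Continuous fun y => f y i) (hac : ∀ i j, Continuous fun y => a y i j) :
    Continuous (genL f a φ) := by
  unfold genL
  apply Continuous.add
  · exact continuous_finset_sum _ fun i _ => (hfc i).mul (continuous_pd1 hφ i)
  · exact continuous_finset_sum _ fun i _ =>
      continuous_finset_sum _ fun j _ => (hac i j).mul (continuous_pd2 hφ i j)

lemma genL_sub_genL {f₁ f₂ : (Fin d → ℝ) → Fin d → ℝ}
    {a₁ a₂ : (Fin d → ℝ) → Fin d → Fin d → ℝ} {φ : (Fin d → ℝ) → ℝ} (y : Fin d → ℝ) :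
    genL f₂ a₂ φ y = genL (fun z i => f₂ z i - f₁ z i) (fun z i j => a₂ z i j - a₁ z i j) φ y
      + genL f₁ a₁ φ y := by
  simp only [genL, sub_mul, Finset.sum_sub_distrib]
  ring
end Helpers2
set_option maxHeartbeats 1000000

/-- the averaged coefficient `h̄(x,μ) = ∫ h(x,y,μ) π(dy;x,μ)` is
bounded and Lipschitz continuous in `x`, uniformly in `μ`. -/
theorem averaged_coefficient_bounded_lipschitz
    (d : ℕ) (hd : 0 < d)
    (f : (Fin d → ℝ) → (Fin d → ℝ) → ProbMeas2 d → Fin d → ℝ)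
    (a : (Fin d → ℝ) → (Fin d → ℝ) → ProbMeas2 d → Fin d → Fin d → ℝ)
    (π : (Fin d → ℝ) → ProbMeas2 d → Measure (Fin d → ℝ))
    (hA1 : AssumptionA1 (fun p : (Fin d → ℝ) × ProbMeas2 d => fun y => a p.1 y p.2))
    (hA2 : AssumptionA2 (fun p : (Fin d → ℝ) × ProbMeas2 d => fun y => f p.1 y p.2))
    (hπ : ∀ x μ, IsInvariantMeasure (fun y => f x y μ) (fun y => a x y μ) (π x μ))
    (hπmom : ∀ q : ℕ, ∃ K : ℝ, ∀ x μ, Integrable (fun y => ‖y‖ ^ q) (π x μ) ∧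
        (∫ y, ‖y‖ ^ q ∂(π x μ)) ≤ K)
    (h : (Fin d → ℝ) → (Fin d → ℝ) → ProbMeas2 d → ℝ)
    (hcont : ∀ μ, Continuous fun p : (Fin d → ℝ) × (Fin d → ℝ) => h p.1 p.2 μ)
    (hpoly : PolyY h)
    (hlh : MixedHolder h)
    (hlf : ∀ i : Fin d, MixedHolder fun x y μ => f x y μ i)
    (hla : ∀ i j : Fin d, MixedHolder fun x y μ => a x y μ i j)
    (v : (Fin d → ℝ) → (Fin d → ℝ) → ProbMeas2 d → ℝ)
    (hvC2 : ∀ x μ, ContDiff ℝ 2 fun y => v x y μ)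
    (hvpoly : ∃ K : ℝ, ∃ q : ℕ, ∀ x y μ,
        |v x y μ| ≤ K * (1 + ‖y‖ ^ q) ∧
        ‖iteratedFDeriv ℝ 1 (fun z => v x z μ) y‖ ≤ K * (1 + ‖y‖ ^ q) ∧
        ‖iteratedFDeriv ℝ 2 (fun z => v x z μ) y‖ ≤ K * (1 + ‖y‖ ^ q))
    (hvpde : ∀ x y μ, genL (fun z => f x z μ) (fun z => a x z μ) (fun z => v x z μ) y =
        h x y μ - ∫ z, h x z μ ∂(π x μ)) :
    ∃ C' : ℝ,
      (∀ x μ, |∫ y, h x y μ ∂(π x μ)| ≤ C') ∧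
      ∀ (x₁ x₂ : Fin d → ℝ) (μ : ProbMeas2 d),
        |(∫ y, h x₁ y μ ∂(π x₁ μ)) - ∫ y, h x₂ y μ ∂(π x₂ μ)| ≤ C' * ‖x₁ - x₂‖ := by

  classical
  obtain ⟨-, -, ⟨Ka, hKa⟩, haC2, -, -⟩ := hA1
  obtain ⟨-, ⟨Cf, hCf⟩, hfC2, -, -⟩ := hA2
  obtain ⟨Kh, mh, hKh⟩ := hpoly
  obtain ⟨KLh, θh, mLh, hθh, -, hKLh⟩ := hlh
  choose KLf θf mLf hθf hθf1 hKLf using hlf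
  choose KLa θa mLa hθa hθa1 hKLa using hla
  obtain ⟨Kv, qv, hKv⟩ := hvpoly
  choose Kq hKq using hπmom
  have mom : ∀ x μ (q : ℕ), Integrable (fun y => ‖y‖ ^ q) (π x μ) := fun x μ q => (hKq q x μ).1
  set Mq : ℕ → ℝ := fun q => max (Kq q) 0 with hMqdef
  have hMq0 : ∀ q, 0 ≤ Mq q := fun q => le_max_right _ _
  have hMq : ∀ (q : ℕ) x μ, (∫ y, ‖y‖ ^ q ∂(π x μ)) ≤ Mq q :=
    fun q x μ => le_trans (hKq q x μ).2 (le_max_left _ _)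
  set Kh' : ℝ := max Kh 0 with hKh'def
  set KLh' : ℝ := max KLh 0 with hKLh'def
  set Kv' : ℝ := max Kv 0 with hKv'def
  have hKh'0 : 0 ≤ Kh' := le_max_right _ _
  have hKLh'0 : 0 ≤ KLh' := le_max_right _ _
  have hKv'0 : 0 ≤ Kv' := le_max_right _ _
  set KF : ℝ := ∑ i, max (KLf i) 0 with hKFdef
  set KA : ℝ := ∑ i, ∑ j, max (KLa i j) 0 with hKAdef
  have hKF0 : 0 ≤ KF := Finset.sum_nonneg fun i _ => le_max_right _ _
  have hKA0 : 0 ≤ KA := Finset.sum_nonneg fun i _ =>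
    Finset.sum_nonneg fun j _ => le_max_right _ _
  have hKFle : ∀ i, KLf i ≤ KF := fun i =>
    le_trans (le_max_left _ _)
      (Finset.single_le_sum (fun k _ => le_max_right (KLf k) 0) (Finset.mem_univ i))
  have hKAle : ∀ i j, KLa i j ≤ KA := by
    intro i j
    have h1 : max (KLa i j) 0 ≤ ∑ l, max (KLa i l) 0 :=
      Finset.single_le_sum (f := fun k => max (KLa i k) 0)
        (fun k _ => le_max_right _ _) (Finset.mem_univ j)
    have h2 : (∑ l, max (KLa i l) 0) ≤ KA :=
      Finset.single_le_sum (f := fun k => ∑ l, max (KLa k l) 0)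
        (fun k _ => Finset.sum_nonneg fun l _ => le_max_right _ _) (Finset.mem_univ i)
    exact le_trans (le_max_left (KLa i j) 0) (le_trans h1 h2)
  set NF : ℕ := Finset.univ.sup mLf with hNFdef
  set NA : ℕ := Finset.univ.sup (fun i => Finset.univ.sup (mLa i)) with hNAdef
  set N : ℕ := max NF NA with hNdef
  have hNFle : ∀ i, mLf i ≤ N :=
    fun i => le_trans (Finset.le_sup (Finset.mem_univ i)) (le_max_left _ _)
  have hNAle : ∀ i j, mLa i j ≤ N := fun i j =>
    le_trans (le_trans (Finset.le_sup (f := mLa i) (Finset.mem_univ j))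
      (Finset.le_sup (f := fun k => Finset.univ.sup (mLa k)) (Finset.mem_univ i)))
      (le_max_right _ _)
  -- constants
  set C1 : ℝ := Kh' * (1 + Mq mh) with hC1def
  set C2 : ℝ := 2 * KLh' * (1 + Mq mLh) with hC2def
  set M2 : ℝ := 12 * ((d : ℝ) * KF + (d : ℝ) ^ 2 * KA) * Kv' with hM2def
  have hM20 : 0 ≤ M2 := by positivity
  set C3 : ℝ := M2 * (1 + Mq (N + qv)) with hC3def
  refine ⟨max C1 (C2 + C3), ?_, ?_⟩
  · -- boundedness
    intro x μ
    haveI : IsProbabilityMeasure (π x μ) := (hπ x μ).1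
    have hcy : Continuous fun y => h x y μ :=
      (hcont μ).comp (continuous_const.prodMk continuous_id)
    have hbd : ∀ y, |h x y μ| ≤ Kh' * (1 + ‖y‖ ^ mh) := fun y =>
      le_trans (hKh x y μ) (mul_le_mul_of_nonneg_right (le_max_left _ _) (by positivity))
    have := abs_integral_le_poly (mom x μ) hcy.aestronglyMeasurable hKh'0 hbd (hMq mh x μ)
    exact le_trans this (le_max_left _ _)
  · -- Lipschitz continuity
    intro x₁ x₂ μ
    haveI : IsProbabilityMeasure (π x₁ μ) := (hπ x₁ μ).1
    haveI : IsProbabilityMeasure (π x₂ μ) := (hπ x₂ μ).1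
    set Δ : ℝ := ‖x₁ - x₂‖ with hΔdef
    have hΔ0 : 0 ≤ Δ := norm_nonneg _
    have hcy1 : Continuous fun y => h x₁ y μ :=
      (hcont μ).comp (continuous_const.prodMk continuous_id)
    have hcy2 : Continuous fun y => h x₂ y μ :=
      (hcont μ).comp (continuous_const.prodMk continuous_id)
    have hbd1 : ∀ y, |h x₁ y μ| ≤ Kh' * (1 + ‖y‖ ^ mh) := fun y =>
      le_trans (hKh x₁ y μ) (mul_le_mul_of_nonneg_right (le_max_left _ _) (by positivity))
    have hbd2 : ∀ y, |h x₂ y μ| ≤ Kh' * (1 + ‖y‖ ^ mh) := fun y =>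
      le_trans (hKh x₂ y μ) (mul_le_mul_of_nonneg_right (le_max_left _ _) (by positivity))
    have Ih1 : Integrable (fun y => h x₁ y μ) (π x₁ μ) :=
      integrable_of_poly (mom x₁ μ) hcy1.aestronglyMeasurable hbd1
    have Ih2 : Integrable (fun y => h x₂ y μ) (π x₁ μ) :=
      integrable_of_poly (mom x₁ μ) hcy2.aestronglyMeasurable hbd2
    -- step 1 : the h-difference term
    have hmin0 : ∀ y : Fin d → ℝ, min (1:ℝ) (‖y - y‖ ^ θh) = 0 := by
      intro y
      rw [sub_self, norm_zero, Real.zero_rpow (ne_of_gt hθh)]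
      exact min_eq_right zero_le_one
    have hdiffbd : ∀ y, |h x₁ y μ - h x₂ y μ| ≤ 2 * KLh' * Δ * (1 + ‖y‖ ^ mLh) := by
      intro y
      have := hKLh x₁ x₂ y y μ
      rw [hmin0 y] at this
      have hKle : KLh ≤ KLh' := le_max_left _ _
      have hpos : (0:ℝ) ≤ ‖y‖ ^ mLh := by positivity
      nlinarith [norm_nonneg (x₁ - x₂), mul_nonneg hΔ0 hpos,
        mul_nonneg hKLh'0 (mul_nonneg hΔ0 hpos), mul_nonneg hKLh'0 hΔ0]
    have step1 : |∫ y, (h x₁ y μ - h x₂ y μ) ∂(π x₁ μ)| ≤ C2 * Δ := by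
      have hK0 : 0 ≤ 2 * KLh' * Δ := by positivity
      have := abs_integral_le_poly (mom x₁ μ) (hcy1.sub hcy2).aestronglyMeasurable hK0
        (fun y => by
          have := hdiffbd y
          calc |h x₁ y μ - h x₂ y μ| ≤ 2 * KLh' * Δ * (1 + ‖y‖ ^ mLh) := hdiffbd y
            _ = 2 * KLh' * Δ * (1 + ‖y‖ ^ mLh) := rfl)
        (hMq mLh x₁ μ)
      calc |∫ y, (h x₁ y μ - h x₂ y μ) ∂(π x₁ μ)| ≤ 2 * KLh' * Δ * (1 + Mq mLh) := this
        _ = C2 * Δ := by rw [hC2def]; ring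
    -- the solution of the Poisson equation at x₂
    set v₂ : (Fin d → ℝ) → ℝ := fun z => v x₂ z μ with hv₂def
    have hv₂C : ContDiff ℝ 2 v₂ := hvC2 x₂ μ
    have hv₂b : ∀ y, |v₂ y| ≤ Kv' * (1 + ‖y‖ ^ qv) ∧
        ‖iteratedFDeriv ℝ 1 v₂ y‖ ≤ Kv' * (1 + ‖y‖ ^ qv) ∧
        ‖iteratedFDeriv ℝ 2 v₂ y‖ ≤ Kv' * (1 + ‖y‖ ^ qv) := by
      intro y
      have hy : (0:ℝ) ≤ 1 + ‖y‖ ^ qv := by positivity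
      obtain ⟨b1, b2, b3⟩ := hKv x₂ y μ
      exact ⟨le_trans b1 (mul_le_mul_of_nonneg_right (le_max_left _ _) hy),
        le_trans b2 (mul_le_mul_of_nonneg_right (le_max_left _ _) hy),
        le_trans b3 (mul_le_mul_of_nonneg_right (le_max_left _ _) hy)⟩
    have hpd1v₂ : ∀ y i, |pd1 v₂ y i| ≤ Kv' * (1 + ‖y‖ ^ qv) :=
      fun y i => le_trans (abs_pd1_le _ _ _) (hv₂b y).2.1
    have hpd2v₂ : ∀ y i j, |pd2 v₂ y i j| ≤ Kv' * (1 + ‖y‖ ^ qv) :=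
      fun y i j => le_trans (abs_pd2_le hv₂C _ _ _) (hv₂b y).2.2
    -- nonnegativity of Cf, Ka
    have hCf0 : 0 ≤ Cf := by
      have := hCf (x₁, μ) 0
      have h1 : (0:ℝ) ≤ Cf * (1 + ‖(0 : Fin d → ℝ)‖) := le_trans (norm_nonneg _) this
      simpa using h1
    have hKa0 : 0 ≤ Ka := le_trans (abs_nonneg _) (hKa (x₁, μ) 0 ⟨0, hd⟩ ⟨0, hd⟩)
    -- invariance: the generator at x₁ integrates to zero against π x₁ μ
    have hzero : ∫ y, genL (fun z => f x₁ z μ) (fun z => a x₁ z μ) v₂ y ∂(π x₁ μ) = 0 := by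
      apply integral_genL_eq_zero _ _ _ (hπ x₁ μ)
        (fun i => (hfC2 (x₁, μ) i).continuous) (fun i j => (haC2 (x₁, μ) i j).continuous)
        (fun y i => le_trans (le_trans (le_of_eq (Real.norm_eq_abs _).symm)
          (norm_le_pi_norm (f x₁ y μ) i)) (hCf (x₁, μ) y))
        (fun y i j => hKa (x₁, μ) y i j) (mom x₁ μ) v₂ hv₂C hKv'0 hv₂b
    -- difference of the generators
    set Δf : (Fin d → ℝ) → Fin d → ℝ := fun z i => f x₂ z μ i - f x₁ z μ i with hΔfdef
    set Δa : (Fin d → ℝ) → Fin d → Fin d → ℝ :=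
      fun z i j => a x₂ z μ i j - a x₁ z μ i j with hΔadef
    have hΔfb : ∀ y i, |Δf y i| ≤ 3 * KF * Δ * (1 + ‖y‖ ^ N) := by
      intro y i
      have hH := hKLf i x₂ x₁ y y μ
      have hmin : min (1:ℝ) (‖y - y‖ ^ θf i) = 0 := by
        rw [sub_self, norm_zero, Real.zero_rpow (ne_of_gt (hθf i))]
        exact min_eq_right zero_le_one
      rw [hmin] at hH
      have hnrev : ‖x₂ - x₁‖ = Δ := by rw [hΔdef, norm_sub_rev]
      rw [hnrev] at hH
      have hpow : ‖y‖ ^ mLf i ≤ 1 + ‖y‖ ^ N := pow_le_one_add_pow (norm_nonneg y) (hNFle i)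
      have hK : KLf i ≤ KF := hKFle i
      have h1 : (0:ℝ) ≤ ‖y‖ ^ mLf i := by positivity
      have h2 : (0:ℝ) ≤ ‖y‖ ^ N := by positivity
      have hS : (0:ℝ) ≤ 1 + ‖y‖ ^ mLf i + ‖y‖ ^ mLf i := by positivity
      have hS3 : 1 + ‖y‖ ^ mLf i + ‖y‖ ^ mLf i ≤ 3 * (1 + ‖y‖ ^ N) := by linarith
      calc |f x₂ y μ i - f x₁ y μ i|
          ≤ KLf i * (0 + Δ) * (1 + ‖y‖ ^ mLf i + ‖y‖ ^ mLf i) := hH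
        _ ≤ KF * (0 + Δ) * (1 + ‖y‖ ^ mLf i + ‖y‖ ^ mLf i) :=
            mul_le_mul_of_nonneg_right
              (mul_le_mul_of_nonneg_right hK (by linarith)) hS
        _ ≤ KF * (0 + Δ) * (3 * (1 + ‖y‖ ^ N)) :=
            mul_le_mul_of_nonneg_left hS3
              (mul_nonneg hKF0 (by linarith))
        _ = 3 * KF * Δ * (1 + ‖y‖ ^ N) := by ring
    have hΔab : ∀ y i j, |Δa y i j| ≤ 3 * KA * Δ * (1 + ‖y‖ ^ N) := by
      intro y i j
      have hH := hKLa i j x₂ x₁ y y μ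
      have hmin : min (1:ℝ) (‖y - y‖ ^ θa i j) = 0 := by
        rw [sub_self, norm_zero, Real.zero_rpow (ne_of_gt (hθa i j))]
        exact min_eq_right zero_le_one
      rw [hmin] at hH
      have hnrev : ‖x₂ - x₁‖ = Δ := by rw [hΔdef, norm_sub_rev]
      rw [hnrev] at hH
      have hpow : ‖y‖ ^ mLa i j ≤ 1 + ‖y‖ ^ N := pow_le_one_add_pow (norm_nonneg y) (hNAle i j)
      have hK : KLa i j ≤ KA := hKAle i j
      have h1 : (0:ℝ) ≤ ‖y‖ ^ mLa i j := by positivity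
      have h2 : (0:ℝ) ≤ ‖y‖ ^ N := by positivity
      have hS : (0:ℝ) ≤ 1 + ‖y‖ ^ mLa i j + ‖y‖ ^ mLa i j := by positivity
      have hS3 : 1 + ‖y‖ ^ mLa i j + ‖y‖ ^ mLa i j ≤ 3 * (1 + ‖y‖ ^ N) := by linarith
      calc |a x₂ y μ i j - a x₁ y μ i j|
          ≤ KLa i j * (0 + Δ) * (1 + ‖y‖ ^ mLa i j + ‖y‖ ^ mLa i j) := hH
        _ ≤ KA * (0 + Δ) * (1 + ‖y‖ ^ mLa i j + ‖y‖ ^ mLa i j) :=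
            mul_le_mul_of_nonneg_right
              (mul_le_mul_of_nonneg_right hK (by linarith)) hS
        _ ≤ KA * (0 + Δ) * (3 * (1 + ‖y‖ ^ N)) :=
            mul_le_mul_of_nonneg_left hS3
              (mul_nonneg hKA0 (by linarith))
        _ = 3 * KA * Δ * (1 + ‖y‖ ^ N) := by ring
    -- bound on the generator difference
    have hgenΔbd : ∀ y, |genL Δf Δa v₂ y| ≤ M2 * Δ * (1 + ‖y‖ ^ (N + qv)) := by
      intro y
      have key := abs_genL_le (f := Δf) (a := Δa) (φ := v₂) (y := y)
        (F := 3 * KF * Δ * (1 + ‖y‖ ^ N)) (A := 3 * KA * Δ * (1 + ‖y‖ ^ N))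
        (P := Kv' * (1 + ‖y‖ ^ qv)) (hΔfb y) (hΔab y) (hpd1v₂ y) (fun i j => hpd2v₂ y i j)
        (by positivity)
      refine le_trans key ?_
      have h4 : (1 + ‖y‖ ^ N) * (1 + ‖y‖ ^ qv) ≤ 4 * (1 + ‖y‖ ^ (N + qv)) :=
        one_add_pow_mul (norm_nonneg y) N qv
      have hdd : (0:ℝ) ≤ (d:ℝ) := Nat.cast_nonneg d
      have e : ((d:ℝ) * (3 * KF * Δ * (1 + ‖y‖ ^ N)) + (d:ℝ) ^ 2 * (3 * KA * Δ * (1 + ‖y‖ ^ N)))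
          * (Kv' * (1 + ‖y‖ ^ qv))
          = 3 * ((d:ℝ) * KF + (d:ℝ) ^ 2 * KA) * Kv' * Δ *
            ((1 + ‖y‖ ^ N) * (1 + ‖y‖ ^ qv)) := by ring
      rw [e]
      have hc0 : (0:ℝ) ≤ 3 * ((d:ℝ) * KF + (d:ℝ) ^ 2 * KA) * Kv' * Δ := by positivity
      calc 3 * ((d:ℝ) * KF + (d:ℝ) ^ 2 * KA) * Kv' * Δ * ((1 + ‖y‖ ^ N) * (1 + ‖y‖ ^ qv))
          ≤ 3 * ((d:ℝ) * KF + (d:ℝ) ^ 2 * KA) * Kv' * Δ * (4 * (1 + ‖y‖ ^ (N + qv))) :=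
            mul_le_mul_of_nonneg_left h4 hc0
        _ = M2 * Δ * (1 + ‖y‖ ^ (N + qv)) := by rw [hM2def]; ring
    -- continuity of the generators
    have hcgΔ : Continuous (genL Δf Δa v₂) :=
      continuous_genL hv₂C
        (fun i => ((hfC2 (x₂, μ) i).continuous).sub ((hfC2 (x₁, μ) i).continuous))
        (fun i j => ((haC2 (x₂, μ) i j).continuous).sub ((haC2 (x₁, μ) i j).continuous))
    have hcg1 : Continuous (genL (fun z => f x₁ z μ) (fun z => a x₁ z μ) v₂) :=
      continuous_genL hv₂C (fun i => (hfC2 (x₁, μ) i).continuous)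
        (fun i j => (haC2 (x₁, μ) i j).continuous)
    -- integrability of the two generator terms
    have IgΔ : Integrable (genL Δf Δa v₂) (π x₁ μ) :=
      integrable_of_poly (mom x₁ μ) hcgΔ.aestronglyMeasurable
        (K := M2 * Δ) (m := N + qv) (fun y => by
          have := hgenΔbd y
          calc |genL Δf Δa v₂ y| ≤ M2 * Δ * (1 + ‖y‖ ^ (N + qv)) := this
            _ = M2 * Δ * (1 + ‖y‖ ^ (N + qv)) := rfl)
    have Ig1 : Integrable (genL (fun z => f x₁ z μ) (fun z => a x₁ z μ) v₂) (π x₁ μ) := by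
      apply integrable_of_poly (mom x₁ μ) hcg1.aestronglyMeasurable
        (K := Kv' * (4 * d * Cf + 2 * d ^ 2 * Ka)) (m := qv + 1)
      intro y
      exact abs_genL_le_poly hCf0 hKa0 hKv'0
        (fun i => le_trans (le_trans (le_of_eq (Real.norm_eq_abs _).symm)
          (norm_le_pi_norm (f x₁ y μ) i)) (hCf (x₁, μ) y))
        (fun i j => hKa (x₁, μ) y i j) (hpd1v₂ y) (fun i j => hpd2v₂ y i j)
    -- step 2 : the measure-difference term
    have hsplit : ∀ y, genL (fun z => f x₂ z μ) (fun z => a x₂ z μ) v₂ y =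
        genL Δf Δa v₂ y + genL (fun z => f x₁ z μ) (fun z => a x₁ z μ) v₂ y :=
      fun y => genL_sub_genL y
    have e1 : ∫ y, genL (fun z => f x₂ z μ) (fun z => a x₂ z μ) v₂ y ∂(π x₁ μ) =
        (∫ y, h x₂ y μ ∂(π x₁ μ)) - ∫ y, h x₂ y μ ∂(π x₂ μ) := by
      have := integral_congr_ae (μ := π x₁ μ)
        (Filter.Eventually.of_forall fun y => hvpde x₂ y μ)
      rw [this, integral_sub Ih2 (integrable_const _), integral_const]
      simp
    have e2 : ∫ y, genL (fun z => f x₂ z μ) (fun z => a x₂ z μ) v₂ y ∂(π x₁ μ) =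
        ∫ y, genL Δf Δa v₂ y ∂(π x₁ μ) := by
      rw [integral_congr_ae (Filter.Eventually.of_forall hsplit),
        integral_add IgΔ Ig1, hzero, add_zero]
    have step2 : |(∫ y, h x₂ y μ ∂(π x₁ μ)) - ∫ y, h x₂ y μ ∂(π x₂ μ)| ≤ C3 * Δ := by
      rw [← e1, e2]
      have := abs_integral_le_poly (mom x₁ μ) hcgΔ.aestronglyMeasurable
        (K := M2 * Δ) (by positivity) (m := N + qv)
        (fun y => hgenΔbd y) (hMq (N + qv) x₁ μ)
      calc |∫ y, genL Δf Δa v₂ y ∂(π x₁ μ)| ≤ M2 * Δ * (1 + Mq (N + qv)) := this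
        _ = C3 * Δ := by rw [hC3def]; ring
    -- final assembly
    have edecomp : (∫ y, h x₁ y μ ∂(π x₁ μ)) - ∫ y, h x₂ y μ ∂(π x₂ μ) =
        (∫ y, (h x₁ y μ - h x₂ y μ) ∂(π x₁ μ)) +
          ((∫ y, h x₂ y μ ∂(π x₁ μ)) - ∫ y, h x₂ y μ ∂(π x₂ μ)) := by
      rw [integral_sub Ih1 Ih2]; ring
    calc |(∫ y, h x₁ y μ ∂(π x₁ μ)) - ∫ y, h x₂ y μ ∂(π x₂ μ)|
        ≤ |∫ y, (h x₁ y μ - h x₂ y μ) ∂(π x₁ μ)| +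
          |(∫ y, h x₂ y μ ∂(π x₁ μ)) - ∫ y, h x₂ y μ ∂(π x₂ μ)| := by
          rw [edecomp]; exact abs_add_le _ _
      _ ≤ C2 * Δ + C3 * Δ := add_le_add step1 step2
      _ = (C2 + C3) * Δ := by ring
      _ ≤ max C1 (C2 + C3) * Δ := mul_le_mul_of_nonneg_right (le_max_right _ _) hΔ0


end
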